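/- arXiv:2012.12803 — 5 statements merged into one kernel-verified Lean document; each statement's English description precedes it below -/
import Mathlib

section
/- Let ε ≥ 0 and δ ∈ [0,1]. Suppose R is a deletion (ε,δ)-DP local randomizer on a set D with output measurable space S, with reference distribution ρ; that is, for every x ∈ D, R(x) and ρ are (ε,δ)-indistinguishable. Then there exists a local randomizer R' on D with output space S such that: (i) for every x ∈ D, R'(x) and ρ are (ε,0)-indistinguishable, and (ii) for every x ∈ D, TV(R(x), R'(x)) ≤ δ. In particular, R' is a (replacement) 2ε-DP local randomizer: for all x, x' ∈ D and all measurable E ⊆ S, R'(x)(E) ≤ e^{2ε}·R'(x')(E). -/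
open MeasureTheory ProbabilityTheory
open scoped ENNReal NNReal

namespace ShuffleDP

noncomputable section

/-- A σ-algebra on `List Z`, transported from `Σ n, Fin n → Z` through
`List.equivSigmaTuple`. -/
instance listMeasurableSpace {Z : Type*} [MeasurableSpace Z] : MeasurableSpace (List Z) :=
  MeasurableSpace.comap (List.equivSigmaTuple (α := Z)) inferInstance

/-- Hockey-stick divergence `D_{e^ε}(P‖Q) = sup_E (P(E) - e^ε Q(E))` (in `ℝ≥0∞`,
with truncated subtraction, over measurable sets `E`). -/
def hsDiv {α : Type*} [MeasurableSpace α] (ε : ℝ) (P Q : Measure α) : ℝ≥0∞ :=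
  ⨆ (E : Set α) (_ : MeasurableSet E), P E - ENNReal.ofReal (Real.exp ε) * Q E

/-- `P` and `Q` are `(ε, δ)`-indistinguishable. -/
def Indist {α : Type*} [MeasurableSpace α] (ε δ : ℝ) (P Q : Measure α) : Prop :=
  hsDiv ε P Q ≤ ENNReal.ofReal δ ∧ hsDiv ε Q P ≤ ENNReal.ofReal δ

/-- Total variation distance. -/
def tvDist {α : Type*} [MeasurableSpace α] (P Q : Measure α) : ℝ≥0∞ :=
  ⨆ (E : Set α) (_ : MeasurableSet E), (P E - Q E) ⊔ (Q E - P E)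

/-- The measure with the given mass function on a (typically countable discrete) space. -/
def ofMass {α : Type*} [MeasurableSpace α] (f : α → ℝ≥0∞) : Measure α :=
  Measure.sum fun a => f a • Measure.dirac a

/-- Mass function of the binomial distribution `Bin(m, p)`. -/
def binomMass (m : ℕ) (p : ℝ) (k : ℕ) : ℝ≥0∞ :=
  ENNReal.ofReal ((m.choose k : ℝ) * p ^ k * (1 - p) ^ (m - k))

/-- Mass function of a Bernoulli distribution with success probability `q`,
viewed as a distribution on `ℕ` supported on `{0, 1}`. -/
def bernMassNat (q : ℝ) (d : ℕ) : ℝ≥0∞ :=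
  if d = 1 then ENNReal.ofReal q else if d = 0 then ENNReal.ofReal (1 - q) else 0

/-- Joint law of `(A, C)` where `C ∼ Bin(n-1, p)` and, conditionally on `C`,
`A ∼ Bin(C, 1/2)`. -/
def pairJoint (n : ℕ) (p : ℝ) : Measure (ℕ × ℕ) :=
  ofMass fun w => binomMass (n - 1) p w.2 * binomMass w.2 (1 / 2) w.1

/-- Law of `(A + 1, C - A)`. -/
def pairP (n : ℕ) (p : ℝ) : Measure (ℕ × ℕ) :=
  (pairJoint n p).map fun w => (w.1 + 1, w.2 - w.1)

/-- Law of `(A, C - A + 1)`. -/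
def pairQ (n : ℕ) (p : ℝ) : Measure (ℕ × ℕ) :=
  (pairJoint n p).map fun w => (w.1, w.2 - w.1 + 1)

/-- Joint law of `(A, C, Δ)` where `C ∼ Bin(n-1, e^{-ε0})`, `A | C ∼ Bin(C, 1/2)` and,
independently, `Δ ∼ Bern(e^{ε0}/(e^{ε0}+1))`. -/
def cloneJoint (n : ℕ) (ε0 : ℝ) : Measure (ℕ × ℕ × ℕ) :=
  ofMass fun w =>
    binomMass (n - 1) (Real.exp (-ε0)) w.2.1 * binomMass w.2.1 (1 / 2) w.1 *
      bernMassNat (Real.exp ε0 / (Real.exp ε0 + 1)) w.2.2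

/-- Law of `(A + Δ, C - A + 1 - Δ)`. -/
def cloneP (n : ℕ) (ε0 : ℝ) : Measure (ℕ × ℕ) :=
  (cloneJoint n ε0).map fun w => (w.1 + w.2.2, w.2.1 - w.1 + 1 - w.2.2)

/-- Law of `(A + 1 - Δ, C - A + Δ)`. -/
def cloneQ (n : ℕ) (ε0 : ℝ) : Measure (ℕ × ℕ) :=
  (cloneJoint n ε0).map fun w => (w.1 + 1 - w.2.2, w.2.1 - w.1 + w.2.2)

/-- Mass function of the first three counts of `MultNom(m; p, p, p, 1-3p)`. -/
def multMass (m : ℕ) (p : ℝ) (w : ℕ × ℕ × ℕ) : ℝ≥0∞ :=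
  if w.1 + w.2.1 + w.2.2 ≤ m then
    ENNReal.ofReal ((m.choose w.1 : ℝ) * ((m - w.1).choose w.2.1 : ℝ) *
      ((m - w.1 - w.2.1).choose w.2.2 : ℝ) * p ^ w.1 * p ^ w.2.1 * p ^ w.2.2 *
      (1 - 3 * p) ^ (m - w.1 - w.2.1 - w.2.2))
  else 0

/-- Joint law of `((A, B, C), Γ)` where `(A,B,C,D') ∼ MultNom(n-1; p,p,p,1-3p)` and,
independently, `Γ ∼ Bern(q)`. -/
def multJoint (n : ℕ) (p q : ℝ) : Measure ((ℕ × ℕ × ℕ) × ℕ) :=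
  ofMass fun w => multMass (n - 1) p w.1 * bernMassNat q w.2

/-- Law of `(A + Γ, B, C + 1 - Γ)`. -/
def multT0 (n : ℕ) (p q : ℝ) : Measure (ℕ × ℕ × ℕ) :=
  (multJoint n p q).map fun w => (w.1.1 + w.2, w.1.2.1, w.1.2.2 + 1 - w.2)

/-- Law of `(A, B + Γ, C + 1 - Γ)`. -/
def multT1 (n : ℕ) (p q : ℝ) : Measure (ℕ × ℕ × ℕ) :=
  (multJoint n p q).map fun w => (w.1.1, w.1.2.1 + w.2, w.1.2.2 + 1 - w.2)

/-- Law of `Bin(c, 1/2)` on `ℕ`. -/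
def binHalf (c : ℕ) : Measure ℕ :=
  ofMass (binomMass c (1 / 2))

/-- `P_c = q·(law of A_c) + (1-q)·(law of A_c + 1)` where `A_c ∼ Bin(c, 1/2)`. -/
def shiftP (q : ℝ) (c : ℕ) : Measure ℕ :=
  ENNReal.ofReal q • binHalf c + ENNReal.ofReal (1 - q) • (binHalf c).map (· + 1)

/-- `Q_c = (1-q)·(law of A_c) + q·(law of A_c + 1)` where `A_c ∼ Bin(c, 1/2)`. -/
def shiftQ (q : ℝ) (c : ℕ) : Measure ℕ :=
  ENNReal.ofReal (1 - q) • binHalf c + ENNReal.ofReal q • (binHalf c).map (· + 1)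

/-- Sequentially run the adaptive randomizers `A` on the remaining inputs (first argument),
given the history of outputs produced so far (second argument); the index `i` of the
randomizer `A^{(i)}` is implicit as the length of the history. -/
def seqRun {D Z : Type*} [MeasurableSpace Z] (A : List Z → D → Measure Z) :
    List D → List Z → Measure (List Z)
  | [], _ => Measure.dirac []
  | x :: xs, acc => (A acc x).bind fun z => (seqRun A xs (acc ++ [z])).map fun l => z :: l

/-- The shuffled algorithm `A_s`: sample a uniformly random permutation `π` of `Fin n` and
sequentially sample `z_i ∼ A^{(i)}(z_{1:i-1}, x_{π(i)})`, returning `z_{1:n}`. -/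
def shuffled {D Z : Type*} [MeasurableSpace Z] (n : ℕ) (A : List Z → D → Measure Z)
    (X : Fin n → D) : Measure (List Z) :=
  ((n.factorial : ℝ≥0∞))⁻¹ • ∑ π : Equiv.Perm (Fin n), seqRun A (List.ofFn fun i => X (π i)) ([] : List Z)

/-- `x ↦ R x` is an `ε0`-DP local randomizer. -/
def IsLocalDP {D Z : Type*} [MeasurableSpace Z] (ε0 : ℝ) (R : D → Measure Z) : Prop :=
  ∀ x x' : D, ∀ E : Set Z, MeasurableSet E → R x E ≤ ENNReal.ofReal (Real.exp ε0) * R x' E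

/-- `x ↦ R x` is an `(ε0, δ0)`-DP local randomizer. -/
def IsLocalDPApprox {D Z : Type*} [MeasurableSpace Z] (ε0 δ0 : ℝ) (R : D → Measure Z) : Prop :=
  ∀ x x' : D, ∀ E : Set Z, MeasurableSet E →
    R x E ≤ ENNReal.ofReal (Real.exp ε0) * R x' E + ENNReal.ofReal δ0

/-- Two datasets differ in exactly one coordinate. -/
def Neighboring {D : Type*} {n : ℕ} (X X' : Fin n → D) : Prop :=
  ∃ i, X i ≠ X' i ∧ ∀ j, j ≠ i → X j = X' j

/-- The uniform distribution on `Fin k`. -/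
def unifFin (k : ℕ) : Measure (Fin k) :=
  ((k : ℝ≥0∞))⁻¹ • Measure.count

/-- The `k`-randomized response with parameter `ε0`. -/
def kRR (k : ℕ) (ε0 : ℝ) (x : Fin k) : Measure (Fin k) :=
  ENNReal.ofReal ((Real.exp ε0 - 1) / (Real.exp ε0 + k - 1)) • Measure.dirac x +
    ENNReal.ofReal (k / (Real.exp ε0 + k - 1)) • unifFin k

/-- Binary randomized response with parameter `ε0`. -/
def rr2 (ε0 : ℝ) (x : Bool) : Measure Bool :=
  ENNReal.ofReal (Real.exp ε0 / (Real.exp ε0 + 1)) • Measure.dirac x +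
    ENNReal.ofReal (1 / (Real.exp ε0 + 1)) • Measure.dirac (!x)

lemma approx_to_pure_aux {S : Type*} [MeasurableSpace S] (ε δ : ℝ) (hε : 0 ≤ ε)
    (P ρ : Measure S) [IsProbabilityMeasure P] [IsProbabilityMeasure ρ]
    (h1 : hsDiv ε P ρ ≤ ENNReal.ofReal δ) (h2 : hsDiv ε ρ P ≤ ENNReal.ofReal δ) :
    ∃ P' : Measure S, IsProbabilityMeasure P' ∧
      (∀ E : Set S, MeasurableSet E → P' E ≤ ENNReal.ofReal (Real.exp ε) * ρ E) ∧
      (∀ E : Set S, MeasurableSet E → ρ E ≤ ENNReal.ofReal (Real.exp ε) * P' E) ∧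
      (∀ E : Set S, MeasurableSet E →
        P E - P' E ≤ ENNReal.ofReal δ ∧ P' E - P E ≤ ENNReal.ofReal δ) := by
  classical
  set U : ℝ≥0∞ := ENNReal.ofReal (Real.exp ε) with hUdef
  set L : ℝ≥0∞ := ENNReal.ofReal (Real.exp (-ε)) with hLdef
  have hU1 : (1 : ℝ≥0∞) ≤ U := ENNReal.one_le_ofReal.mpr (Real.one_le_exp hε)
  have hL1 : L ≤ 1 := ENNReal.ofReal_le_one.mpr (Real.exp_le_one_iff.mpr (by linarith))
  have hLU : U * L = 1 := by
    rw [hUdef, hLdef, ← ENNReal.ofReal_mul (Real.exp_nonneg _), ← Real.exp_add]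
    simp
  have hUne : U ≠ ∞ := ENNReal.ofReal_ne_top
  have hLne : L ≠ ∞ := ENNReal.ofReal_ne_top
  set f : S → ℝ≥0∞ := P.rnDeriv ρ with hfdef
  have hf : Measurable f := Measure.measurable_rnDeriv _ _
  set sing : Measure S := P.singularPart ρ with hsingdef
  have hdec : sing + ρ.withDensity f = P := Measure.singularPart_add_rnDeriv P ρ
  obtain ⟨N, hNmeas, hsingN, hρNc⟩ := Measure.mutuallySingular_singularPart P ρ
  -- g : clamped density
  set g : S → ℝ≥0∞ := fun s => max L (min U (f s)) with hgdef
  have hg : Measurable g := measurable_const.max (measurable_const.min hf)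
  have hgL : ∀ s, L ≤ g s := fun s => le_max_left _ _
  have hgU : ∀ s, g s ≤ U := fun s => max_le (le_trans hL1 hU1) (min_le_left _ _)
  have hming : ∀ s, min U (f s) ≤ g s := fun s => le_max_right _ _
  have hgeq : ∀ s, g s = min U (f s) + (L - f s) := by
    intro s
    rcases lt_or_ge (f s) L with h | h
    · have h1 : min U (f s) = f s := min_eq_right (le_trans h.le (le_trans hL1 hU1))
      rw [hgdef]
      simp only [h1]
      rw [max_eq_left h.le, add_tsub_cancel_of_le h.le]
    · have h1 : L ≤ min U (f s) := le_min (le_trans hL1 hU1) h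
      rw [hgdef]
      simp only [max_eq_right h1, tsub_eq_zero_of_le h, add_zero]
  have hfeq : ∀ s, min U (f s) + (f s - U) = f s := by
    intro s
    rcases le_or_gt (f s) U with h | h
    · simp [min_eq_right h, tsub_eq_zero_of_le h]
    · rw [min_eq_left h.le, add_tsub_cancel_of_le h.le]
  set A0 : ℝ≥0∞ := ∫⁻ s, (f s - U) ∂ρ with hA0def
  set B : ℝ≥0∞ := ∫⁻ s, (L - f s) ∂ρ with hBdef
  set m : ℝ≥0∞ := ∫⁻ s, g s ∂ρ with hmdef
  set A : ℝ≥0∞ := sing Set.univ + A0 with hAdef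
  have hmU : m ≤ U := by
    calc m ≤ ∫⁻ _, U ∂ρ := lintegral_mono hgU
    _ = U := by simp
  have hm_ne : m ≠ ∞ := (lt_of_le_of_lt hmU (lt_top_iff_ne_top.mpr hUne)).ne
  have hintf : (∫⁻ s, f s ∂ρ) + sing Set.univ = 1 := by
    have := congrArg (fun μ : Measure S => μ Set.univ) hdec
    simp only [Measure.add_apply] at this
    rw [withDensity_apply _ MeasurableSet.univ, Measure.restrict_univ] at this
    rw [add_comm] at this
    rw [this, measure_univ]
  have hintf_le : (∫⁻ s, f s ∂ρ) ≤ 1 := le_of_le_of_eq le_self_add hintf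
  have hintf_ne : (∫⁻ s, f s ∂ρ) ≠ ∞ := (lt_of_le_of_lt hintf_le ENNReal.one_lt_top).ne
  have hmin_eq : (∫⁻ s, min U (f s) ∂ρ) + A0 = ∫⁻ s, f s ∂ρ := by
    rw [hA0def, ← lintegral_add_left (measurable_const.min hf)]
    exact lintegral_congr hfeq
  have hm_eq : m = (∫⁻ s, min U (f s) ∂ρ) + B := by
    rw [hmdef, hBdef, ← lintegral_add_left (measurable_const.min hf)]
    exact lintegral_congr hgeq
  have hkey : m + A = 1 + B := by
    rw [hm_eq, hAdef]
    calc (∫⁻ s, min U (f s) ∂ρ) + B + (sing Set.univ + A0)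
        = ((∫⁻ s, min U (f s) ∂ρ) + A0 + sing Set.univ) + B := by ring
      _ = 1 + B := by rw [hmin_eq, hintf]
  have hB1 : B ≤ 1 := by
    calc B ≤ ∫⁻ _, L ∂ρ := lintegral_mono fun s => tsub_le_self
    _ = L := by simp
    _ ≤ 1 := hL1
  have hB_ne : B ≠ ∞ := (lt_of_le_of_lt hB1 ENNReal.one_lt_top).ne
  have hA1 : A ≤ 1 := by
    rw [hAdef, add_comm, ← hintf]
    exact add_le_add (lintegral_mono fun s => tsub_le_self) le_rfl
  have hA_ne : A ≠ ∞ := (lt_of_le_of_lt hA1 ENNReal.one_lt_top).ne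
  -- A ≤ δ
  have hAδ : A ≤ ENNReal.ofReal δ := by
    set E0 : Set S := {s | U < f s} ∪ Nᶜ with hE0def
    have hE0 : MeasurableSet E0 := (measurableSet_lt measurable_const hf).union hNmeas.compl
    have hsingfin : sing Set.univ ≠ ∞ := by
      have : sing Set.univ ≤ P Set.univ := Measure.singularPart_le P ρ _
      exact (lt_of_le_of_lt (le_trans this (by simp)) ENNReal.one_lt_top).ne
    have hsingE0 : sing Set.univ ≤ sing E0 := by
      have h1 : sing Nᶜ = sing Set.univ := by
        have := measure_add_measure_compl (μ := sing) hNmeas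
        rw [hsingN, zero_add] at this; exact this
      calc sing Set.univ = sing Nᶜ := h1.symm
      _ ≤ sing E0 := measure_mono Set.subset_union_right
    have hρE0 : ρ E0 ≤ ρ {s | U < f s} := by
      calc ρ E0 ≤ ρ {s | U < f s} + ρ Nᶜ := measure_union_le _ _
      _ = ρ {s | U < f s} := by rw [hρNc, add_zero]
    have hsetint : (∫⁻ s in {s | U < f s}, f s ∂ρ) = A0 + U * ρ {s | U < f s} := by
      have h1 : (∫⁻ s in {s | U < f s}, f s ∂ρ)
          = ∫⁻ s in {s | U < f s}, (f s - U) + U ∂ρ := by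
        refine setLIntegral_congr_fun (measurableSet_lt measurable_const hf)
          (fun s hs => ?_)
        rw [tsub_add_cancel_of_le (le_of_lt hs)]
      rw [h1, lintegral_add_right _ measurable_const, setLIntegral_const]
      congr 1
      -- ∫_{U<f} (f - U) = A0
      rw [hA0def, ← lintegral_add_compl (μ := ρ) (fun s => f s - U) (measurableSet_lt measurable_const hf)]
      have h2 : (∫⁻ s in {s | U < f s}ᶜ, (f s - U) ∂ρ) = 0 := by
        have := setLIntegral_congr_fun (f := fun s => f s - U) (g := fun _ => (0 : ℝ≥0∞))
          (s := {s | U < f s}ᶜ) (measurableSet_lt measurable_const hf).compl (μ := ρ)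
          (fun s hs => tsub_eq_zero_of_le (not_lt.mp hs))
        rw [this]; simp
      rw [h2, add_zero]
    have hPE0 : A + U * ρ E0 ≤ P E0 := by
      have hP : P E0 = sing E0 + ∫⁻ s in E0, f s ∂ρ := by
        rw [← hdec, Measure.add_apply, withDensity_apply _ hE0]
      rw [hP, hAdef]
      have h3 : A0 + U * ρ E0 ≤ ∫⁻ s in E0, f s ∂ρ := by
        calc A0 + U * ρ E0 ≤ A0 + U * ρ {s | U < f s} := by
              exact add_le_add le_rfl (mul_le_mul_right hρE0 U)
        _ = ∫⁻ s in {s | U < f s}, f s ∂ρ := hsetint.symm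
        _ ≤ ∫⁻ s in E0, f s ∂ρ := lintegral_mono_set Set.subset_union_left
      calc sing Set.univ + A0 + U * ρ E0 = sing Set.univ + (A0 + U * ρ E0) := by ring
        _ ≤ sing E0 + ∫⁻ s in E0, f s ∂ρ := add_le_add hsingE0 h3
    have : A ≤ P E0 - U * ρ E0 := ENNReal.le_sub_of_add_le_right (by finiteness) hPE0
    refine le_trans this (le_trans ?_ h1)
    exact le_iSup₂ (f := fun E (_ : MeasurableSet E) => P E - ENNReal.ofReal (Real.exp ε) * ρ E) E0 hE0
  -- B ≤ δ
  have hBδ : B ≤ ENNReal.ofReal δ := by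
    set E1 : Set S := {s | f s < L} ∩ N with hE1def
    have hE1 : MeasurableSet E1 := (measurableSet_lt hf measurable_const).inter hNmeas
    have hsingE1 : sing E1 = 0 := measure_mono_null Set.inter_subset_right hsingN
    have hPE1 : P E1 = ∫⁻ s in E1, f s ∂ρ := by
      rw [← hdec, Measure.add_apply, withDensity_apply _ hE1, hsingE1, zero_add]
    have hρE1 : ρ {s | f s < L} ≤ ρ E1 := by
      calc ρ {s | f s < L} ≤ ρ (E1 ∪ Nᶜ) := by
            refine measure_mono fun x hx => ?_
            by_cases hxN : x ∈ N
            · exact Or.inl ⟨hx, hxN⟩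
            · exact Or.inr hxN
      _ ≤ ρ E1 + ρ Nᶜ := measure_union_le _ _
      _ = ρ E1 := by rw [hρNc, add_zero]
    have hsetint : ρ {s | f s < L}
        = U * (∫⁻ s in {s | f s < L}, f s ∂ρ) + U * B := by
      have h1 : ρ {s | f s < L} = ∫⁻ s in {s | f s < L}, U * f s + U * (L - f s) ∂ρ := by
        rw [← setLIntegral_one]
        refine setLIntegral_congr_fun (measurableSet_lt hf measurable_const)
          (fun s hs => ?_)
        rw [← mul_add, add_tsub_cancel_of_le (le_of_lt hs), hLU]
      rw [h1, lintegral_add_left (hf.const_mul U),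
        lintegral_const_mul _ hf, lintegral_const_mul (f := fun s => L - f s) _ (measurable_const.sub hf)]
      congr 2
      rw [hBdef, ← lintegral_add_compl (μ := ρ) (fun s => L - f s) (measurableSet_lt hf measurable_const)]
      have h2 : (∫⁻ s in {s | f s < L}ᶜ, (L - f s) ∂ρ) = 0 := by
        have := setLIntegral_congr_fun (f := fun s => L - f s) (g := fun _ => (0 : ℝ≥0∞))
          (s := {s | f s < L}ᶜ) (measurableSet_lt hf measurable_const).compl (μ := ρ)
          (fun s hs => tsub_eq_zero_of_le (not_lt.mp hs))
        rw [this]; simp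
      rw [h2, add_zero]
    have hmain : U * B + U * P E1 ≤ ρ E1 := by
      calc U * B + U * P E1 = U * (∫⁻ s in E1, f s ∂ρ) + U * B := by rw [hPE1]; ring
      _ ≤ U * (∫⁻ s in {s | f s < L}, f s ∂ρ) + U * B := by
          exact add_le_add (mul_le_mul_right (lintegral_mono_set Set.inter_subset_left) U) le_rfl
      _ = ρ {s | f s < L} := hsetint.symm
      _ ≤ ρ E1 := hρE1
    have hUB : U * B ≤ ρ E1 - U * P E1 := ENNReal.le_sub_of_add_le_right (by finiteness) hmain
    have : U * B ≤ ENNReal.ofReal δ := by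
      refine le_trans hUB (le_trans ?_ h2)
      exact le_iSup₂ (f := fun E (_ : MeasurableSet E) => ρ E - ENNReal.ofReal (Real.exp ε) * P E) E1 hE1
    calc B = 1 * B := (one_mul B).symm
    _ ≤ U * B := mul_le_mul_left hU1 B
    _ ≤ ENNReal.ofReal δ := this
  -- general set bounds relating P and ∫ g
  have hPle : ∀ E : Set S, MeasurableSet E → P E ≤ (∫⁻ s in E, g s ∂ρ) + A := by
    intro E hE
    have hP : P E = sing E + ∫⁻ s in E, f s ∂ρ := by
      rw [← hdec, Measure.add_apply, withDensity_apply _ hE]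
    rw [hP, hAdef]
    have h1 : (∫⁻ s in E, f s ∂ρ)
        = (∫⁻ s in E, min U (f s) ∂ρ) + ∫⁻ s in E, (f s - U) ∂ρ := by
      rw [← lintegral_add_left (measurable_const.min hf)]
      exact setLIntegral_congr_fun hE (fun s _ => (hfeq s).symm)
    rw [h1]
    calc sing E + ((∫⁻ s in E, min U (f s) ∂ρ) + ∫⁻ s in E, (f s - U) ∂ρ)
        ≤ sing Set.univ + ((∫⁻ s in E, g s ∂ρ) + A0) := by
          refine add_le_add (measure_mono (Set.subset_univ E)) (add_le_add ?_ ?_)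
          · exact setLIntegral_mono hg fun s _ => hming s
          · exact setLIntegral_le_lintegral _ _
      _ = (∫⁻ s in E, g s ∂ρ) + (sing Set.univ + A0) := by ring
  have hgle : ∀ E : Set S, MeasurableSet E → (∫⁻ s in E, g s ∂ρ) ≤ P E + B := by
    intro E hE
    have hP : P E = sing E + ∫⁻ s in E, f s ∂ρ := by
      rw [← hdec, Measure.add_apply, withDensity_apply _ hE]
    have h1 : (∫⁻ s in E, g s ∂ρ)
        = (∫⁻ s in E, min U (f s) ∂ρ) + ∫⁻ s in E, (L - f s) ∂ρ := by
      rw [← lintegral_add_left (measurable_const.min hf)]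
      exact setLIntegral_congr_fun hE (fun s _ => hgeq s)
    rw [h1, hP]
    refine add_le_add ?_ (setLIntegral_le_lintegral _ _)
    calc (∫⁻ s in E, min U (f s) ∂ρ) ≤ ∫⁻ s in E, f s ∂ρ :=
          setLIntegral_mono hf fun s _ => min_le_right _ _
    _ ≤ sing E + ∫⁻ s in E, f s ∂ρ := le_add_self
  -- construct the corrected density g'
  rcases le_or_gt m 1 with hm | hm
  · -- case m ≤ 1 : push mass up towards U
    set c : ℝ≥0∞ := (1 - m) / (U - m) with hcdef
    set g' : S → ℝ≥0∞ := fun s => g s + c * (U - g s) with hg'def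
    have hg'meas : Measurable g' := hg.add (measurable_const.mul (measurable_const.sub hg))
    have hc1 : c ≤ 1 := ENNReal.div_le_of_le_mul (by rw [one_mul]; exact tsub_le_tsub_right hU1 m)
    have hgg' : ∀ s, g s ≤ g' s := fun s => le_self_add
    have hg'U : ∀ s, g' s ≤ U := by
      intro s
      calc g' s ≤ g s + 1 * (U - g s) := add_le_add le_rfl (mul_le_mul_left hc1 _)
      _ = U := by rw [one_mul, add_tsub_cancel_of_le (hgU s)]
    have hg'L : ∀ s, L ≤ g' s := fun s => le_trans (hgL s) (hgg' s)
    have hintsub : (∫⁻ s, (U - g s) ∂ρ) = U - m := by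
      rw [lintegral_sub hg hm_ne (Filter.Eventually.of_forall hgU)]
      simp [hmdef]
    have hcUm : c * (U - m) = 1 - m := by
      rcases eq_or_lt_of_le hm with hm1 | hm1
      · rw [hcdef, ← hm1]; simp
      · have h0 : U - m ≠ 0 := by
          rw [← pos_iff_ne_zero, tsub_pos_iff_lt]; exact lt_of_lt_of_le hm1 hU1
        rw [hcdef, ENNReal.div_mul_cancel h0 (by finiteness)]
    have hintg' : (∫⁻ s, g' s ∂ρ) = 1 := by
      rw [hg'def]
      simp only
      rw [lintegral_add_left hg, lintegral_const_mul (f := fun s => U - g s) _ (measurable_const.sub hg), hintsub,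
        hcUm, add_tsub_cancel_of_le hm]
    have hg'diff : ∀ E : Set S, MeasurableSet E →
        (∫⁻ s in E, g' s ∂ρ) ≤ (∫⁻ s in E, g s ∂ρ) + (1 - m) := by
      intro E hE
      have h1 : (∫⁻ s in E, g' s ∂ρ)
          = (∫⁻ s in E, g s ∂ρ) + ∫⁻ s in E, c * (U - g s) ∂ρ :=
        lintegral_add_left hg _
      rw [h1]
      refine add_le_add le_rfl ?_
      calc (∫⁻ s in E, c * (U - g s) ∂ρ) ≤ ∫⁻ s, c * (U - g s) ∂ρ :=
            setLIntegral_le_lintegral _ _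
      _ = c * (U - m) := by rw [lintegral_const_mul (f := fun s => U - g s) _ (measurable_const.sub hg), hintsub]
      _ = 1 - m := hcUm
    refine ⟨ρ.withDensity g', ⟨by rw [withDensity_apply _ MeasurableSet.univ,
      Measure.restrict_univ, hintg']⟩, ?_, ?_, ?_⟩
    · intro E hE
      rw [withDensity_apply _ hE]
      calc (∫⁻ s in E, g' s ∂ρ) ≤ ∫⁻ _ in E, U ∂ρ := setLIntegral_mono measurable_const fun s _ => hg'U s
      _ = U * ρ E := setLIntegral_const E U
    · intro E hE
      rw [withDensity_apply _ hE]
      calc ρ E = ∫⁻ _ in E, (1 : ℝ≥0∞) ∂ρ := (setLIntegral_one E).symm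
      _ ≤ ∫⁻ s in E, U * g' s ∂ρ := by
          refine setLIntegral_mono (measurable_const.mul hg'meas) fun s _ => ?_
          calc (1 : ℝ≥0∞) = U * L := hLU.symm
          _ ≤ U * g' s := mul_le_mul_right (hg'L s) U
      _ = U * ∫⁻ s in E, g' s ∂ρ := lintegral_const_mul _ hg'meas
    · intro E hE
      rw [withDensity_apply _ hE]
      constructor
      · refine tsub_le_iff_right.mpr ?_
        calc P E ≤ (∫⁻ s in E, g s ∂ρ) + A := hPle E hE
        _ ≤ (∫⁻ s in E, g' s ∂ρ) + ENNReal.ofReal δ := by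
            exact add_le_add (setLIntegral_mono hg'meas fun s _ => hgg' s) hAδ
        _ = ENNReal.ofReal δ + ∫⁻ s in E, g' s ∂ρ := add_comm _ _
      · refine tsub_le_iff_right.mpr ?_
        have hBA : B + (1 - m) = A := by
          refine (ENNReal.add_right_inj hm_ne).mp ?_
          calc m + (B + (1 - m)) = B + (m + (1 - m)) := by ring
          _ = B + 1 := by rw [add_tsub_cancel_of_le hm]
          _ = m + A := by rw [add_comm B 1, ← hkey]
        calc (∫⁻ s in E, g' s ∂ρ) ≤ (∫⁻ s in E, g s ∂ρ) + (1 - m) := hg'diff E hE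
        _ ≤ (P E + B) + (1 - m) := add_le_add (hgle E hE) le_rfl
        _ = P E + A := by rw [add_assoc, hBA]
        _ ≤ ENNReal.ofReal δ + P E := by rw [add_comm]; exact add_le_add hAδ le_rfl
  · -- case 1 < m : pull mass down towards L
    set c : ℝ≥0∞ := (1 - L) / (m - L) with hcdef
    set g' : S → ℝ≥0∞ := fun s => L + c * (g s - L) with hg'def
    have hg'meas : Measurable g' := measurable_const.add (measurable_const.mul (hg.sub measurable_const))
    have hc1 : c ≤ 1 := ENNReal.div_le_of_le_mul (by rw [one_mul]; exact tsub_le_tsub_right hm.le L)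
    have hg'g : ∀ s, g' s ≤ g s := by
      intro s
      calc g' s ≤ L + 1 * (g s - L) := add_le_add le_rfl (mul_le_mul_left hc1 _)
      _ = g s := by rw [one_mul, add_tsub_cancel_of_le (hgL s)]
    have hg'U : ∀ s, g' s ≤ U := fun s => le_trans (hg'g s) (hgU s)
    have hg'L : ∀ s, L ≤ g' s := fun s => le_self_add
    have hintsub : (∫⁻ s, (g s - L) ∂ρ) = m - L := by
      rw [lintegral_sub measurable_const (by simp [lintegral_const, hLne])
        (Filter.Eventually.of_forall hgL)]
      simp [hmdef, hLdef]
    have hcmL : c * (m - L) = 1 - L := by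
      have h0 : m - L ≠ 0 := by
        rw [← pos_iff_ne_zero, tsub_pos_iff_lt]; exact lt_of_le_of_lt hL1 hm
      rw [hcdef, ENNReal.div_mul_cancel h0 (by finiteness)]
    have hintg' : (∫⁻ s, g' s ∂ρ) = 1 := by
      rw [hg'def]
      simp only
      rw [lintegral_add_left measurable_const, lintegral_const_mul (f := fun s => g s - L) _ (hg.sub measurable_const),
        hintsub, hcmL, lintegral_const, measure_univ, mul_one, add_tsub_cancel_of_le hL1]
    have hintg'ne : (∫⁻ s, g' s ∂ρ) ≠ ∞ := by rw [hintg']; exact ENNReal.one_ne_top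
    have hintdiff : (∫⁻ s, (g s - g' s) ∂ρ) = m - 1 := by
      rw [lintegral_sub hg'meas hintg'ne (Filter.Eventually.of_forall hg'g), hintg']
    have hg'diff : ∀ E : Set S, MeasurableSet E →
        (∫⁻ s in E, g s ∂ρ) ≤ (∫⁻ s in E, g' s ∂ρ) + (m - 1) := by
      intro E hE
      have h1 : (∫⁻ s in E, g s ∂ρ)
          = (∫⁻ s in E, g' s ∂ρ) + ∫⁻ s in E, (g s - g' s) ∂ρ := by
        rw [← lintegral_add_left hg'meas]
        refine setLIntegral_congr_fun hE (fun s _ => ?_)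
        rw [add_tsub_cancel_of_le (hg'g s)]
      rw [h1]
      refine add_le_add le_rfl ?_
      calc (∫⁻ s in E, (g s - g' s) ∂ρ) ≤ ∫⁻ s, (g s - g' s) ∂ρ := setLIntegral_le_lintegral _ _
      _ = m - 1 := hintdiff
    refine ⟨ρ.withDensity g', ⟨by rw [withDensity_apply _ MeasurableSet.univ,
      Measure.restrict_univ, hintg']⟩, ?_, ?_, ?_⟩
    · intro E hE
      rw [withDensity_apply _ hE]
      calc (∫⁻ s in E, g' s ∂ρ) ≤ ∫⁻ _ in E, U ∂ρ := setLIntegral_mono measurable_const fun s _ => hg'U s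
      _ = U * ρ E := setLIntegral_const E U
    · intro E hE
      rw [withDensity_apply _ hE]
      calc ρ E = ∫⁻ _ in E, (1 : ℝ≥0∞) ∂ρ := (setLIntegral_one E).symm
      _ ≤ ∫⁻ s in E, U * g' s ∂ρ := by
          refine setLIntegral_mono (measurable_const.mul hg'meas) fun s _ => ?_
          calc (1 : ℝ≥0∞) = U * L := hLU.symm
          _ ≤ U * g' s := mul_le_mul_right (hg'L s) U
      _ = U * ∫⁻ s in E, g' s ∂ρ := lintegral_const_mul _ hg'meas
    · intro E hE
      rw [withDensity_apply _ hE]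
      constructor
      · refine tsub_le_iff_right.mpr ?_
        have hAB : (m - 1) + A = B := by
          refine (ENNReal.add_right_inj ENNReal.one_ne_top).mp ?_
          calc 1 + ((m - 1) + A) = (1 + (m - 1)) + A := by ring
          _ = m + A := by rw [add_tsub_cancel_of_le hm.le]
          _ = 1 + B := hkey
        calc P E ≤ (∫⁻ s in E, g s ∂ρ) + A := hPle E hE
        _ ≤ ((∫⁻ s in E, g' s ∂ρ) + (m - 1)) + A := add_le_add (hg'diff E hE) le_rfl
        _ = (∫⁻ s in E, g' s ∂ρ) + ((m - 1) + A) := by ring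
        _ = (∫⁻ s in E, g' s ∂ρ) + B := by rw [hAB]
        _ ≤ ENNReal.ofReal δ + ∫⁻ s in E, g' s ∂ρ := by
            rw [add_comm]; exact add_le_add hBδ le_rfl
      · refine tsub_le_iff_right.mpr ?_
        calc (∫⁻ s in E, g' s ∂ρ) ≤ ∫⁻ s in E, g s ∂ρ :=
              setLIntegral_mono hg fun s _ => hg'g s
        _ ≤ P E + B := hgle E hE
        _ ≤ ENNReal.ofReal δ + P E := by rw [add_comm]; exact add_le_add hBδ le_rfl

/-- **Lemma 3.7 (from approximate to pure deletion DP).** Any deletion `(ε, δ)`-DP local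
randomizer `R` with reference distribution `ρ` can be replaced by a deletion `ε`-DP local
randomizer `R'` (same reference distribution) with `TV(R(x), R'(x)) ≤ δ` for every `x`;
in particular `R'` is a replacement `2ε`-DP local randomizer. -/
theorem approx_to_pure_deletion {D S : Type*} [MeasurableSpace S]
    (ε δ : ℝ) (hε : 0 ≤ ε) (hδ : δ ∈ Set.Icc (0 : ℝ) 1)
    (R : D → Measure S) (hR : ∀ x, IsProbabilityMeasure (R x))
    (ρ : Measure S) (hρ : IsProbabilityMeasure ρ)
    (hdel : ∀ x, Indist ε δ (R x) ρ) :
    ∃ R' : D → Measure S,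
      (∀ x, IsProbabilityMeasure (R' x)) ∧
      (∀ x, Indist ε 0 (R' x) ρ) ∧
      (∀ x, tvDist (R x) (R' x) ≤ ENNReal.ofReal δ) ∧
      IsLocalDP (2 * ε) R' := by
  have hmain : ∀ x : D, ∃ P' : Measure S, IsProbabilityMeasure P' ∧
      (∀ E : Set S, MeasurableSet E → P' E ≤ ENNReal.ofReal (Real.exp ε) * ρ E) ∧
      (∀ E : Set S, MeasurableSet E → ρ E ≤ ENNReal.ofReal (Real.exp ε) * P' E) ∧
      (∀ E : Set S, MeasurableSet E →
        R x E - P' E ≤ ENNReal.ofReal δ ∧ P' E - R x E ≤ ENNReal.ofReal δ) := by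
    intro x
    haveI := hR x
    haveI := hρ
    exact approx_to_pure_aux ε δ hε (R x) ρ (hdel x).1 (hdel x).2
  choose R' hprob hup hlow htv using hmain
  refine ⟨R', hprob, ?_, ?_, ?_⟩
  · intro x
    constructor
    · rw [ENNReal.ofReal_zero]
      exact iSup₂_le fun E hE => le_of_eq (tsub_eq_zero_of_le (hup x E hE))
    · rw [ENNReal.ofReal_zero]
      exact iSup₂_le fun E hE => le_of_eq (tsub_eq_zero_of_le (hlow x E hE))
  · intro x
    exact iSup₂_le fun E hE => max_le (htv x E hE).1 (htv x E hE).2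
  · intro x x' E hE
    calc R' x E ≤ ENNReal.ofReal (Real.exp ε) * ρ E := hup x E hE
    _ ≤ ENNReal.ofReal (Real.exp ε) * (ENNReal.ofReal (Real.exp ε) * R' x' E) :=
        mul_le_mul_right (hlow x' E hE) _
    _ = ENNReal.ofReal (Real.exp (2 * ε)) * R' x' E := by
        rw [two_mul, Real.exp_add, ENNReal.ofReal_mul (Real.exp_nonneg _), mul_assoc]


end

end ShuffleDP
end

section
/- Let ε0 > 0 and q = e^{ε0}/(e^{ε0}+1). For c ∈ ℕ let A_c ∼ Bin(c, 1/2), and define probability distributions on ℕ by P_c = q·(law of A_c) + (1−q)·(law of A_c + 1) and Q_c = (1−q)·(law of A_c) + q·(law of A_c + 1). Then for every ε with 0 ≤ ε < ε0 and all natural numbers c > c', one has D_{e^ε}(P_c‖Q_c) ≤ D_{e^ε}(P_{c'}‖Q_{c'}) and D_{e^ε}(Q_c‖P_c) ≤ D_{e^ε}(Q_{c'}‖P_{c'}). -/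
open MeasureTheory ProbabilityTheory
open scoped ENNReal NNReal

namespace ShuffleDP

noncomputable section

/-! ### Auxiliary lemmas for Lemma C.3 -/

lemma ofMass_apply (f : ℕ → ℝ≥0∞) {E : Set ℕ} (hE : MeasurableSet E) :
    ofMass f E = ∑' a, f a * E.indicator 1 a := by
  rw [ofMass, Measure.sum_apply _ hE]
  refine tsum_congr fun a => ?_
  rw [Measure.smul_apply, smul_eq_mul, Measure.dirac_apply' _ hE]

lemma binomMass_half (m k : ℕ) :
    binomMass m (1 / 2) k = ENNReal.ofReal ((m.choose k : ℝ) * (1 / 2) ^ m) := by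
  unfold binomMass
  rcases le_or_gt k m with h | h
  · congr 1
    rw [show (1 : ℝ) - 1 / 2 = 1 / 2 by norm_num, mul_assoc, ← pow_add]
    congr 2
    omega
  · rw [Nat.choose_eq_zero_of_lt h]
    simp

lemma binomMass_half_succ (c k : ℕ) :
    binomMass (c + 1) (1 / 2) k =
      ENNReal.ofReal (1 / 2) * binomMass c (1 / 2) k +
        ENNReal.ofReal (1 / 2) * (if k = 0 then 0 else binomMass c (1 / 2) (k - 1)) := by
  rcases k with _ | j
  · simp only [if_pos rfl, mul_zero, add_zero, binomMass_half]
    rw [← ENNReal.ofReal_mul (by norm_num)]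
    simp [pow_succ]
    ring
  · simp only [Nat.succ_ne_zero, if_false, Nat.add_sub_cancel, binomMass_half]
    rw [← ENNReal.ofReal_mul (by norm_num), ← ENNReal.ofReal_mul (by norm_num),
      ← ENNReal.ofReal_add (by positivity) (by positivity)]
    congr 1
    have h : ((c + 1).choose (j + 1) : ℝ) = (c.choose j : ℝ) + (c.choose (j + 1) : ℝ) := by
      rw [Nat.choose_succ_succ]
      push_cast
      ring
    rw [h, pow_succ]
    ring

/-- The "shift down" operation on sets. -/
def sdown (E : Set ℕ) : Set ℕ := (· + 1) ⁻¹' E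

lemma binHalf_succ_apply (c : ℕ) {E : Set ℕ} (hE : MeasurableSet E) :
    binHalf (c + 1) E =
      ENNReal.ofReal (1 / 2) * binHalf c E + ENNReal.ofReal (1 / 2) * binHalf c (sdown E) := by
  simp only [binHalf]
  rw [ofMass_apply _ hE, ofMass_apply _ hE,
    ofMass_apply _ (MeasurableSet.of_discrete (s := sdown E))]
  have key : ∀ k, binomMass (c + 1) (1 / 2) k * E.indicator 1 k =
      ENNReal.ofReal (1 / 2) * (binomMass c (1 / 2) k * E.indicator 1 k) +
        ENNReal.ofReal (1 / 2) *
          ((if k = 0 then 0 else binomMass c (1 / 2) (k - 1)) * E.indicator 1 k) := by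
    intro k
    rw [binomMass_half_succ]
    ring
  calc ∑' k, binomMass (c + 1) (1 / 2) k * E.indicator 1 k
      = ∑' k, (ENNReal.ofReal (1 / 2) * (binomMass c (1 / 2) k * E.indicator 1 k) +
          ENNReal.ofReal (1 / 2) *
            ((if k = 0 then 0 else binomMass c (1 / 2) (k - 1)) * E.indicator 1 k)) :=
        tsum_congr key
    _ = ENNReal.ofReal (1 / 2) * ∑' k, binomMass c (1 / 2) k * E.indicator 1 k +
          ENNReal.ofReal (1 / 2) *
            ∑' k, (if k = 0 then 0 else binomMass c (1 / 2) (k - 1)) * E.indicator 1 k := by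
        rw [ENNReal.tsum_add, ENNReal.tsum_mul_left, ENNReal.tsum_mul_left]
    _ = _ := by
        have hshift : ∑' k, (if k = 0 then 0 else binomMass c (1 / 2) (k - 1)) *
              E.indicator 1 k =
            ∑' k, binomMass c (1 / 2) k * (sdown E).indicator 1 k := by
          rw [tsum_eq_zero_add' (f := fun k =>
            (if k = 0 then 0 else binomMass c (1 / 2) (k - 1)) * E.indicator 1 k)
            ENNReal.summable]
          simp only [if_true, if_pos rfl, zero_mul, zero_add, Nat.succ_ne_zero, if_false,
            Nat.add_sub_cancel]
          apply tsum_congr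
          intro j
          congr 1
        rw [hshift]

lemma shiftP_apply (p : ℝ) (c : ℕ) {E : Set ℕ} (hE : MeasurableSet E) :
    shiftP p c E = ENNReal.ofReal p * binHalf c E +
      ENNReal.ofReal (1 - p) * binHalf c (sdown E) := by
  rw [shiftP, Measure.add_apply, Measure.smul_apply, Measure.smul_apply, smul_eq_mul,
    smul_eq_mul, Measure.map_apply Measurable.of_discrete hE]
  rfl

lemma shiftP_succ_apply (p : ℝ) (c : ℕ) {E : Set ℕ} (hE : MeasurableSet E) :
    shiftP p (c + 1) E = ENNReal.ofReal (1 / 2) * shiftP p c E +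
      ENNReal.ofReal (1 / 2) * shiftP p c (sdown E) := by
  have hE' : MeasurableSet (sdown E) := .of_discrete
  have hE'' : MeasurableSet (sdown (sdown E)) := .of_discrete
  rw [shiftP_apply p (c + 1) hE, shiftP_apply p c hE, shiftP_apply p c hE',
    binHalf_succ_apply c hE, binHalf_succ_apply c hE']
  ring

lemma hsDiv_shiftP_step (ε p p' : ℝ) (c : ℕ) :
    hsDiv ε (shiftP p (c + 1)) (shiftP p' (c + 1)) ≤ hsDiv ε (shiftP p c) (shiftP p' c) := by
  refine iSup₂_le fun E hE => ?_
  have hE' : MeasurableSet (sdown E) := .of_discrete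
  set r := ENNReal.ofReal (Real.exp ε) with hr
  set h := ENNReal.ofReal (1 / 2 : ℝ) with hh
  have hfin : h ≠ ∞ := ENNReal.ofReal_ne_top
  set a := shiftP p c E
  set a' := shiftP p c (sdown E)
  set b := shiftP p' c E
  set b' := shiftP p' c (sdown E)
  have hmul : ∀ x y : ℝ≥0∞, h * x - h * y = h * (x - y) := fun x y =>
    (ENNReal.mul_sub fun _ _ => hfin).symm
  have hDa : a - r * b ≤ hsDiv ε (shiftP p c) (shiftP p' c) := le_iSup₂ (f := fun E _ =>
    shiftP p c E - r * shiftP p' c E) E hE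
  have hDb : a' - r * b' ≤ hsDiv ε (shiftP p c) (shiftP p' c) :=
    le_iSup₂ (f := fun E _ => shiftP p c E - r * shiftP p' c E) (sdown E) hE'
  calc shiftP p (c + 1) E - r * shiftP p' (c + 1) E
      = (h * a + h * a') - (h * (r * b) + h * (r * b')) := by
        rw [shiftP_succ_apply p c hE, shiftP_succ_apply p' c hE]
        congr 1
        ring
    _ ≤ (h * a - h * (r * b)) + (h * a' - h * (r * b')) := add_tsub_add_le_tsub_add_tsub
    _ = h * (a - r * b) + h * (a' - r * b') := by rw [hmul, hmul]
    _ ≤ h * hsDiv ε (shiftP p c) (shiftP p' c) + h * hsDiv ε (shiftP p c) (shiftP p' c) :=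
        add_le_add (mul_le_mul_right hDa h) (mul_le_mul_right hDb h)
    _ = (h + h) * hsDiv ε (shiftP p c) (shiftP p' c) := by ring
    _ = hsDiv ε (shiftP p c) (shiftP p' c) := by
        rw [hh, ← ENNReal.ofReal_add (by norm_num) (by norm_num)]
        norm_num

lemma hsDiv_shiftP_mono (ε p p' : ℝ) {c c' : ℕ} (hle : c' ≤ c) :
    hsDiv ε (shiftP p c) (shiftP p' c) ≤ hsDiv ε (shiftP p c') (shiftP p' c') := by
  induction hle with
  | refl => exact le_rfl
  | step h ih => exact (hsDiv_shiftP_step ε p p' _).trans ih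

lemma shiftQ_eq_shiftP (q : ℝ) (c : ℕ) : shiftQ q c = shiftP (1 - q) c := by
  rw [shiftQ, shiftP, show (1 : ℝ) - (1 - q) = q by ring]

/-- **Lemma C.3 (monotonicity in `c` of the divergence between shifted binomials).**
With `q = e^ε0/(e^ε0+1)`, `P_c = q·Bin(c,1/2) + (1-q)·(Bin(c,1/2)+1)` and
`Q_c = (1-q)·Bin(c,1/2) + q·(Bin(c,1/2)+1)`, the hockey-stick divergences
`D_{e^ε}(P_c‖Q_c)` and `D_{e^ε}(Q_c‖P_c)` are nonincreasing in `c` for `0 ≤ ε < ε0`. -/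
theorem shifted_binom_divergence_mono (ε0 : ℝ) (hε0 : 0 < ε0)
    (q : ℝ) (hq : q = Real.exp ε0 / (Real.exp ε0 + 1)) :
    ∀ ε : ℝ, 0 ≤ ε → ε < ε0 → ∀ c c' : ℕ, c' < c →
      hsDiv ε (shiftP q c) (shiftQ q c) ≤ hsDiv ε (shiftP q c') (shiftQ q c') ∧
      hsDiv ε (shiftQ q c) (shiftP q c) ≤ hsDiv ε (shiftQ q c') (shiftP q c') := by
  intro ε _ _ c c' hcc
  rw [shiftQ_eq_shiftP]
  rw [shiftQ_eq_shiftP q c']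
  exact ⟨hsDiv_shiftP_mono ε q (1 - q) hcc.le, hsDiv_shiftP_mono ε (1 - q) q hcc.le⟩

end

end ShuffleDP
end

section
/- Let ε0 > 0 and let μ, ν_0, ν_1 be probability measures on a measurable space S such that for all measurable E ⊆ S, ν_0(E) ≤ e^{ε0}·μ(E) and ν_1(E) ≤ e^{ε0}·μ(E). Then there exists a probability measure LO on S such that μ = (1/(2e^{ε0}))·ν_0 + (1/(2e^{ε0}))·ν_1 + (1 − e^{−ε0})·LO. -/
open MeasureTheory ProbabilityTheory
open scoped ENNReal NNReal

namespace ShuffleDP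

noncomputable section

/-- **Decomposition of an `ε0`-DP randomizer's output into clones and a leftover.**
If `ν₀(E) ≤ e^ε0 μ(E)` and `ν₁(E) ≤ e^ε0 μ(E)` for all measurable `E`, then
`μ = (1/(2e^ε0)) ν₀ + (1/(2e^ε0)) ν₁ + (1 - e^{-ε0}) LO` for some probability measure `LO`. -/
theorem mixture_decomposition {S : Type*} [MeasurableSpace S]
    (ε0 : ℝ) (hε0 : 0 < ε0)
    (μ ν₀ ν₁ : Measure S)
    (hμ : IsProbabilityMeasure μ) (hν₀ : IsProbabilityMeasure ν₀)
    (hν₁ : IsProbabilityMeasure ν₁)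
    (h0 : ∀ E : Set S, MeasurableSet E → ν₀ E ≤ ENNReal.ofReal (Real.exp ε0) * μ E)
    (h1 : ∀ E : Set S, MeasurableSet E → ν₁ E ≤ ENNReal.ofReal (Real.exp ε0) * μ E) :
    ∃ LO : Measure S, IsProbabilityMeasure LO ∧
      μ = ENNReal.ofReal (1 / (2 * Real.exp ε0)) • ν₀ +
        ENNReal.ofReal (1 / (2 * Real.exp ε0)) • ν₁ +
        ENNReal.ofReal (1 - Real.exp (-ε0)) • LO := by
  have hexp : (0:ℝ) < Real.exp ε0 := Real.exp_pos _
  set c : ℝ≥0∞ := ENNReal.ofReal (1 / (2 * Real.exp ε0)) with hc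
  have hce : c * ENNReal.ofReal (Real.exp ε0) = ENNReal.ofReal (1/2) := by
    rw [hc, ← ENNReal.ofReal_mul (by positivity)]
    congr 1; field_simp
  set ν : Measure S := c • ν₀ + c • ν₁ with hν
  haveI : IsFiniteMeasure ν := by
    constructor
    simp only [hν, Measure.add_apply, Measure.smul_apply, smul_eq_mul,
      measure_univ, mul_one]
    exact ENNReal.add_lt_top.mpr ⟨ENNReal.ofReal_lt_top, ENNReal.ofReal_lt_top⟩
  have hle : ν ≤ μ := by
    refine Measure.le_iff.mpr fun E hE => ?_
    calc ν E = c * ν₀ E + c * ν₁ E := by simp [hν]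
      _ ≤ c * (ENNReal.ofReal (Real.exp ε0) * μ E) +
          c * (ENNReal.ofReal (Real.exp ε0) * μ E) := by
          gcongr
          · exact h0 E hE
          · exact h1 E hE
      _ = ENNReal.ofReal (1/2) * μ E + ENNReal.ofReal (1/2) * μ E := by
          simp only [← mul_assoc, hce]
      _ = μ E := by
          rw [← add_mul, ← ENNReal.ofReal_add (by norm_num) (by norm_num)]
          norm_num
  have hνuniv : ν Set.univ = ENNReal.ofReal (Real.exp (-ε0)) := by
    simp only [hν, Measure.add_apply, Measure.smul_apply, smul_eq_mul,
      measure_univ, mul_one, hc]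
    rw [← ENNReal.ofReal_add (by positivity) (by positivity)]
    congr 1
    rw [Real.exp_neg]
    field_simp
    ring
  set a : ℝ≥0∞ := ENNReal.ofReal (1 - Real.exp (-ε0)) with ha
  have hapos : (0:ℝ) < 1 - Real.exp (-ε0) := by
    have : Real.exp (-ε0) < 1 := Real.exp_lt_one_iff.mpr (by linarith)
    linarith
  have ha0 : a ≠ 0 := by
    simp [ha, ENNReal.ofReal_pos.mpr hapos, (ENNReal.ofReal_pos.mpr hapos).ne']
  have hatop : a ≠ ⊤ := ENNReal.ofReal_ne_top
  have hsub : (μ - ν) Set.univ = a := by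
    rw [Measure.sub_apply MeasurableSet.univ hle, hνuniv, measure_univ, ha,
      ENNReal.ofReal_sub _ (Real.exp_pos _).le, ENNReal.ofReal_one]
  refine ⟨a⁻¹ • (μ - ν), ⟨by
    simp only [Measure.smul_apply, smul_eq_mul, hsub]
    exact ENNReal.inv_mul_cancel ha0 hatop⟩, ?_⟩
  rw [smul_smul, ENNReal.mul_inv_cancel ha0 hatop, one_smul]
  have := Measure.sub_add_cancel_of_le (μ := μ) hle
  calc μ = μ - ν + ν := this.symm
    _ = c • ν₀ + c • ν₁ + (μ - ν) := by rw [hν, add_comm]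

end

end ShuffleDP
end

section
/- Let k ≥ 2 be an integer, ε0 > 0, and set p = k/((k+1)·(e^{ε0}+k−1)). Then for any two distinct elements j_0, j_1 ∈ [k] and any x ∈ [k], there exists a probability distribution LO on [k] such that kRR(x) = p·Unif([k]) + p·δ_{j_0} + p·δ_{j_1} + (1−3p)·LO, where kRR is the k-randomized response with parameter ε0. -/
open MeasureTheory ProbabilityTheory
open scoped ENNReal NNReal

namespace ShuffleDP

noncomputable section

/-- **Decomposition of `k`-randomized response (used in Corollary 4.2).**
With `p = k/((k+1)(e^ε0 + k - 1))`, for any distinct `j₀ ≠ j₁` and any `x`,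
`kRR(x) = p·Unif([k]) + p·δ_{j₀} + p·δ_{j₁} + (1-3p)·LO` for some distribution `LO`. -/
theorem kRR_decomposition (k : ℕ) (hk : 2 ≤ k) (ε0 : ℝ) (hε0 : 0 < ε0)
    (p : ℝ) (hp : p = (k : ℝ) / (((k : ℝ) + 1) * (Real.exp ε0 + k - 1)))
    (j₀ j₁ x : Fin k) (hj : j₀ ≠ j₁) :
    ∃ LO : Measure (Fin k), IsProbabilityMeasure LO ∧
      kRR k ε0 x = ENNReal.ofReal p • unifFin k + ENNReal.ofReal p • Measure.dirac j₀ +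
        ENNReal.ofReal p • Measure.dirac j₁ + ENNReal.ofReal (1 - 3 * p) • LO := by
  set e := Real.exp ε0 with he
  have he1 : 1 < e := by rw [he]; exact Real.one_lt_exp_iff.mpr hε0
  have hk2 : (2:ℝ) ≤ (k:ℝ) := by exact_mod_cast hk
  have hd : (0:ℝ) < e + k - 1 := by linarith
  have hD : (0:ℝ) < ((k:ℝ) + 1) * (e + k - 1) := by positivity
  have hp0 : 0 ≤ p := by rw [hp]; positivity
  have hkey : (e - 1) / (e + (k:ℝ) - 1) = 1 - ((k:ℝ) + 1) * p := by
    rw [hp]; field_simp; ring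
  have ha0 : 0 ≤ (e - 1) / (e + (k:ℝ) - 1) := div_nonneg (by linarith) hd.le
  have hc : 0 < 1 - 3 * p := by
    have h3 : 3 * p < 1 := by
      rw [hp, mul_div_assoc']
      rw [div_lt_one hD]
      nlinarith
    linarith
  -- abbreviations
  set a : ℝ := (e - 1) / (e + (k:ℝ) - 1) with ha
  set c : ℝ := 1 - 3 * p with hcdef
  have hCne : ENNReal.ofReal c ≠ 0 := by
    simp [ENNReal.ofReal_eq_zero, not_le, hc]
  have hCtop : ENNReal.ofReal c ≠ ∞ := ENNReal.ofReal_ne_top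
  -- decomposition of count
  have hjset : ({j₀, j₁} : Set (Fin k)) = {j₀} ∪ {j₁} := Set.insert_eq j₀ {j₁}
  have hcount : (Measure.count : Measure (Fin k)) =
      Measure.dirac j₀ + Measure.dirac j₁ +
        Measure.count.restrict (({j₀, j₁} : Set (Fin k))ᶜ) := by
    have h2 : Measure.count.restrict ({j₀, j₁} : Set (Fin k)) =
        Measure.dirac j₀ + Measure.dirac j₁ := by
      rw [hjset, Measure.restrict_union (by simp [Set.disjoint_singleton, hj])
          (MeasurableSet.of_discrete),
        Measure.restrict_singleton, Measure.restrict_singleton,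
        Measure.count_singleton, Measure.count_singleton, one_smul, one_smul]
    conv_lhs => rw [← Measure.restrict_univ (μ := (Measure.count : Measure (Fin k))),
      ← Set.union_compl_self ({j₀, j₁} : Set (Fin k)),
      Measure.restrict_union disjoint_compl_right (MeasurableSet.of_discrete), h2]
  -- count of the complement
  have hcompl : Measure.count (({j₀, j₁} : Set (Fin k))ᶜ) = ENNReal.ofReal ((k:ℝ) - 2) := by
    have hfin : Measure.count ({j₀, j₁} : Set (Fin k)) = 2 := by
      rw [hjset, measure_union (by simp [Set.disjoint_singleton, hj]) MeasurableSet.of_discrete,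
        Measure.count_singleton, Measure.count_singleton]
      norm_num
    have := measure_compl (μ := (Measure.count : Measure (Fin k)))
      (s := ({j₀, j₁} : Set (Fin k))) MeasurableSet.of_discrete (by rw [hfin]; simp)
    rw [this, hfin, Measure.count_univ]
    have hcard : ((ENat.card (Fin k) : ℕ∞) : ℝ≥0∞) = (k : ℝ≥0∞) := by simp
    rw [hcard]
    rw [show ((k:ℝ) - 2) = ((k:ℝ)) - 2 from rfl, ENNReal.ofReal_sub _ (by norm_num),
      ENNReal.ofReal_natCast]
    norm_num
  -- define LO
  refine ⟨(ENNReal.ofReal c)⁻¹ • (ENNReal.ofReal a • Measure.dirac x +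
      ENNReal.ofReal p • Measure.count.restrict (({j₀, j₁} : Set (Fin k))ᶜ)), ?_, ?_⟩
  · constructor
    have happ : (ENNReal.ofReal a • Measure.dirac x +
        ENNReal.ofReal p • Measure.count.restrict (({j₀, j₁} : Set (Fin k))ᶜ)) Set.univ
        = ENNReal.ofReal c := by
      simp only [Measure.coe_add, Pi.add_apply, Measure.coe_smul, Pi.smul_apply,
        smul_eq_mul, Measure.dirac_apply' _ MeasurableSet.univ,
        Measure.restrict_apply MeasurableSet.univ, Set.univ_inter]
      rw [hcompl]
      simp only [Set.indicator_univ, Pi.one_apply, mul_one]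
      rw [← ENNReal.ofReal_mul hp0, ← ENNReal.ofReal_add ha0 (by nlinarith)]
      congr 1
      rw [hkey, hcdef]; ring
    simp only [Measure.coe_smul, Pi.smul_apply, smul_eq_mul]
    rw [happ, ENNReal.inv_mul_cancel hCne hCtop]
  · have hLO : ENNReal.ofReal c • ((ENNReal.ofReal c)⁻¹ • (ENNReal.ofReal a • Measure.dirac x +
        ENNReal.ofReal p • Measure.count.restrict (({j₀, j₁} : Set (Fin k))ᶜ)))
        = ENNReal.ofReal a • Measure.dirac x +
          ENNReal.ofReal p • Measure.count.restrict (({j₀, j₁} : Set (Fin k))ᶜ) := by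
      rw [smul_smul, ENNReal.mul_inv_cancel hCne hCtop, one_smul]
    rw [hcdef] at hLO
    rw [hLO, kRR]
    -- count = k • unifFin
    have hkne : (k : ℝ≥0∞) ≠ 0 := by
      simp only [ne_eq, Nat.cast_eq_zero]; omega
    have hktop : (k : ℝ≥0∞) ≠ ∞ := ENNReal.natCast_ne_top k
    have hcu : (Measure.count : Measure (Fin k)) = (k : ℝ≥0∞) • unifFin k := by
      rw [unifFin, smul_smul, ENNReal.mul_inv_cancel hkne hktop, one_smul]
    -- coefficient identity : k/(e+k-1) = (k+1) * p
    have hbp : (k:ℝ) / (e + (k:ℝ) - 1) = ((k:ℝ) + 1) * p := by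
      rw [hp]; field_simp
    have hb : ENNReal.ofReal ((k:ℝ) / (e + (k:ℝ) - 1)) =
        ENNReal.ofReal p + (k : ℝ≥0∞) * ENNReal.ofReal p := by
      rw [hbp, ENNReal.ofReal_mul (by positivity), ENNReal.ofReal_add (by positivity)
        zero_le_one, ENNReal.ofReal_natCast, ENNReal.ofReal_one]
      ring
    have hsum : ENNReal.ofReal p • Measure.dirac j₀ + ENNReal.ofReal p • Measure.dirac j₁ +
        ENNReal.ofReal p • Measure.count.restrict (({j₀, j₁} : Set (Fin k))ᶜ)
        = ((k : ℝ≥0∞) * ENNReal.ofReal p) • unifFin k := by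
      rw [← smul_add, ← smul_add, ← hcount, hcu, smul_smul, mul_comm]
    rw [hb, add_smul, ← hsum]
    abel

end

end ShuffleDP
end

section
/- Let n ≥ 1 be an integer and p ∈ [0,1]. Let C ∼ Bin(n−1, p) and, conditionally on C, A ∼ Bin(C, 1/2); let P be the law of (A+1, C−A) and Q the law of (A, C−A+1), both distributions on ℕ×ℕ. Then for every (a,b) ∈ ℕ×ℕ, b·P({(a,b)}) = a·Q({(a,b)}); in particular, whenever b ≥ 1 and Q({(a,b)}) > 0, P({(a,b)}) = (a/b)·Q({(a,b)}). -/
open MeasureTheory ProbabilityTheory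
open scoped ENNReal NNReal

namespace ShuffleDP

noncomputable section

lemma ofMass_apply' {α : Type*} [MeasurableSpace α] (f : α → ℝ≥0∞) {S : Set α}
    (hS : MeasurableSet S) : ofMass f S = ∑' a, S.indicator f a := by
  rw [ofMass, Measure.sum_apply _ hS]
  refine tsum_congr fun a => ?_
  rw [Measure.smul_apply, Measure.dirac_apply' _ hS, smul_eq_mul]
  by_cases h : a ∈ S <;> simp [Set.indicator, h]

lemma binomMass_eq_zero {m k : ℕ} (h : m < k) (q : ℝ) : binomMass m q k = 0 := by
  rw [binomMass, Nat.choose_eq_zero_of_lt h]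
  simp

lemma pairP_apply_succ (n : ℕ) (p : ℝ) (a b : ℕ) :
    pairP n p {(a + 1, b)} = binomMass (n - 1) p (a + b) * binomMass (a + b) (1 / 2) a := by
  rw [pairP, Measure.map_apply (measurable_of_countable _) (measurableSet_singleton _),
    pairJoint, ofMass_apply' _ ((measurable_of_countable _) (measurableSet_singleton _))]
  have h : ∀ w : ℕ × ℕ,
      ((fun w : ℕ × ℕ => (w.1 + 1, w.2 - w.1)) ⁻¹' {(a + 1, b)}).indicator
        (fun w => binomMass (n - 1) p w.2 * binomMass w.2 (1 / 2) w.1) w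
      = ({((a, a + b) : ℕ × ℕ)} : Set (ℕ × ℕ)).indicator
        (fun w => binomMass (n - 1) p w.2 * binomMass w.2 (1 / 2) w.1) w := by
    rintro ⟨A, C⟩
    by_cases hw : (A, C) = ((a, a + b) : ℕ × ℕ)
    · rw [hw, Set.indicator_of_mem (by simp [Set.mem_preimage, Nat.add_sub_cancel_left]),
        Set.indicator_of_mem (Set.mem_singleton _)]
    · by_cases hmem : (A, C) ∈ (fun w : ℕ × ℕ => (w.1 + 1, w.2 - w.1)) ⁻¹' {(a + 1, b)}
      · have hmem' := hmem
        simp only [Set.mem_preimage, Set.mem_singleton_iff, Prod.mk.injEq] at hmem'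
        obtain ⟨h1, h2⟩ := hmem'
        have hC : C < A := by
          rcases lt_or_ge C A with h | h
          · exact h
          · exfalso; apply hw; rw [Prod.mk.injEq]; omega
        have hz : binomMass C (1 / 2) A = 0 := binomMass_eq_zero hC _
        rw [Set.indicator_of_mem hmem, Set.indicator_of_notMem (by simp [hw])]
        simp only []
        rw [hz, mul_zero]
      · rw [Set.indicator_of_notMem hmem, Set.indicator_of_notMem (by simp [hw])]
  rw [tsum_congr h, tsum_eq_single ((a, a + b) : ℕ × ℕ)]
  · simp [Set.indicator]
  · intro w hw; simp [Set.indicator, hw]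

lemma pairQ_apply_succ (n : ℕ) (p : ℝ) (a b : ℕ) :
    pairQ n p {(a, b + 1)} = binomMass (n - 1) p (a + b) * binomMass (a + b) (1 / 2) a := by
  rw [pairQ, Measure.map_apply (measurable_of_countable _) (measurableSet_singleton _),
    pairJoint, ofMass_apply' _ ((measurable_of_countable _) (measurableSet_singleton _))]
  have h : ∀ w : ℕ × ℕ,
      ((fun w : ℕ × ℕ => (w.1, w.2 - w.1 + 1)) ⁻¹' {(a, b + 1)}).indicator
        (fun w => binomMass (n - 1) p w.2 * binomMass w.2 (1 / 2) w.1) w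
      = ({((a, a + b) : ℕ × ℕ)} : Set (ℕ × ℕ)).indicator
        (fun w => binomMass (n - 1) p w.2 * binomMass w.2 (1 / 2) w.1) w := by
    rintro ⟨A, C⟩
    by_cases hw : (A, C) = ((a, a + b) : ℕ × ℕ)
    · rw [hw, Set.indicator_of_mem (by simp [Set.mem_preimage, Nat.add_sub_cancel_left]),
        Set.indicator_of_mem (Set.mem_singleton _)]
    · by_cases hmem : (A, C) ∈ (fun w : ℕ × ℕ => (w.1, w.2 - w.1 + 1)) ⁻¹' {(a, b + 1)}
      · have hmem' := hmem
        simp only [Set.mem_preimage, Set.mem_singleton_iff, Prod.mk.injEq] at hmem'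
        obtain ⟨h1, h2⟩ := hmem'
        have hC : C < A := by
          rcases lt_or_ge C A with h | h
          · exact h
          · exfalso; apply hw; rw [Prod.mk.injEq]; omega
        have hz : binomMass C (1 / 2) A = 0 := binomMass_eq_zero hC _
        rw [Set.indicator_of_mem hmem, Set.indicator_of_notMem (by simp [hw])]
        simp only []
        rw [hz, mul_zero]
      · rw [Set.indicator_of_notMem hmem, Set.indicator_of_notMem (by simp [hw])]
  rw [tsum_congr h, tsum_eq_single ((a, a + b) : ℕ × ℕ)]
  · simp [Set.indicator]
  · intro w hw; simp [Set.indicator, hw]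

lemma pairP_apply_zero (n : ℕ) (p : ℝ) (b : ℕ) : pairP n p {(0, b)} = 0 := by
  rw [pairP, Measure.map_apply (measurable_of_countable _) (measurableSet_singleton _)]
  convert measure_empty (μ := pairJoint n p)
  ext ⟨A, C⟩
  simp [Set.mem_preimage]

lemma pairQ_apply_zero (n : ℕ) (p : ℝ) (a : ℕ) : pairQ n p {(a, 0)} = 0 := by
  rw [pairQ, Measure.map_apply (measurable_of_countable _) (measurableSet_singleton _)]
  convert measure_empty (μ := pairJoint n p)
  ext ⟨A, C⟩
  simp [Set.mem_preimage]

lemma pair_key (a b : ℕ) :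
    ((b + 1 : ℕ) : ℝ≥0∞) * binomMass (a + b + 1) (1 / 2) a
      = ((a + 1 : ℕ) : ℝ≥0∞) * binomMass (a + b + 1) (1 / 2) (a + 1) := by
  rw [binomMass, binomMass]
  have h1 : a + b + 1 - a = b + 1 := by omega
  have h2 : a + b + 1 - (a + 1) = b := by omega
  rw [h1, h2, ← ENNReal.ofReal_natCast (b + 1), ← ENNReal.ofReal_natCast (a + 1),
    ← ENNReal.ofReal_mul (by positivity), ← ENNReal.ofReal_mul (by positivity)]
  congr 1
  have hnat : (b + 1) * (a + b + 1).choose a = (a + 1) * (a + b + 1).choose (a + 1) := by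
    have := Nat.choose_succ_right_eq (a + b + 1) a
    have hc : a + b + 1 - a = b + 1 := by omega
    rw [hc] at this
    calc (b + 1) * (a + b + 1).choose a = (a + b + 1).choose a * (b + 1) := by ring
      _ = (a + b + 1).choose (a + 1) * (a + 1) := this.symm
      _ = (a + 1) * (a + b + 1).choose (a + 1) := by ring
  have hr : ((b + 1 : ℕ) : ℝ) * ((a + b + 1).choose a : ℝ)
      = ((a + 1 : ℕ) : ℝ) * ((a + b + 1).choose (a + 1) : ℝ) := by exact_mod_cast hnat
  have hpow : ((1 : ℝ) - 1 / 2) = 1 / 2 := by norm_num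
  rw [hpow]
  linear_combination ((1 / 2 : ℝ) ^ a * (1 / 2 : ℝ) ^ (b + 1)) * hr

/-- **Likelihood-ratio identity for the pair of binomial-count distributions.**
With `P` the law of `(A+1, C-A)` and `Q` the law of `(A, C-A+1)`,
`b·P({(a,b)}) = a·Q({(a,b)})` for all `(a,b)`, and `P({(a,b)}) = (a/b)·Q({(a,b)})`
whenever `b ≥ 1` and `Q({(a,b)}) > 0`. -/
theorem pair_likelihood_ratio (n : ℕ) (hn : 1 ≤ n) (p : ℝ) (hp : p ∈ Set.Icc (0 : ℝ) 1) :
    ∀ a b : ℕ,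
      (b : ℝ≥0∞) * pairP n p {(a, b)} = (a : ℝ≥0∞) * pairQ n p {(a, b)} ∧
      (1 ≤ b → 0 < pairQ n p {(a, b)} →
        pairP n p {(a, b)} = ((a : ℝ≥0∞) / (b : ℝ≥0∞)) * pairQ n p {(a, b)}) := by
  intro a b
  have main : (b : ℝ≥0∞) * pairP n p {(a, b)} = (a : ℝ≥0∞) * pairQ n p {(a, b)} := by
    match a, b with
    | 0, b => simp [pairP_apply_zero]
    | a + 1, 0 => simp [pairQ_apply_zero]
    | a + 1, b + 1 =>
      rw [pairP_apply_succ, pairQ_apply_succ]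
      have h1 : a + 1 + b = a + b + 1 := by omega
      have h2 : a + (b + 1) = a + b + 1 := by omega
      rw [h1, h2, mul_comm (binomMass (n - 1) p (a + b + 1)) (binomMass (a + b + 1) (1 / 2) a),
        mul_comm (binomMass (n - 1) p (a + b + 1)) (binomMass (a + b + 1) (1 / 2) (a + 1)),
        ← mul_assoc, ← mul_assoc, pair_key]
  refine ⟨main, fun hb hQ => ?_⟩
  have hbne : (b : ℝ≥0∞) ≠ 0 := by
    simp only [ne_eq, Nat.cast_eq_zero]; omega
  have hbtop : (b : ℝ≥0∞) ≠ ⊤ := ENNReal.natCast_ne_top b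
  have hP : pairP n p {(a, b)} = ((a : ℝ≥0∞) * pairQ n p {(a, b)}) / (b : ℝ≥0∞) :=
    (ENNReal.eq_div_iff hbne hbtop).mpr main
  rw [hP, div_eq_mul_inv, div_eq_mul_inv, mul_right_comm]

end

end ShuffleDP
end
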